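/- Let G be a connected hole-free graph and uv a good pair in G. Then for every vertex z not in the line generated by u and v, there exists a common neighbour c of u and v such that c lies on a shortest path from z to u and on a shortest path from z to v. -/

import Mathlib

open SimpleGraph

variable {V : Type*}

/-- The interval between two vertices: vertices on some shortest path. -/
def interval (G : SimpleGraph V) (x y : V) : Set V :=
  {z | G.dist x y = G.dist x z + G.dist z y}

/-- The line generated by two vertices. -/
def line (G : SimpleGraph V) (x y : V) : Set V :=
  {z | z ∈ interval G x y ∨ x ∈ interval G z y ∨ y ∈ interval G x z}

/-- The house graph: a 5-cycle 0-1-2-3-4-0 plus the chord 1-4. -/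
def house : SimpleGraph (Fin 5) :=
  SimpleGraph.fromEdgeSet {s(0,1), s(1,2), s(2,3), s(3,4), s(4,0), s(1,4)}

/-- A graph is {house, hole}-free if it has no induced house and no induced
cycle of length at least 5. -/
def HHFree (G : SimpleGraph V) : Prop :=
  IsEmpty (house ↪g G) ∧ ∀ n, 5 ≤ n → IsEmpty (cycleGraph n ↪g G)

/-- A graph is hole-free if it has no induced cycle of length at least 5. -/
def HoleFree (G : SimpleGraph V) : Prop :=
  ∀ n, 5 ≤ n → IsEmpty (cycleGraph n ↪g G)

/-- A good pair: two vertices at distance 2 with a common neighbour `c`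
such that `line u c = line c v`. -/
def GoodPair (G : SimpleGraph V) (u v : V) : Prop :=
  G.dist u v = 2 ∧ ∃ c, G.Adj u c ∧ G.Adj c v ∧ line G u c = line G c v

/-- The set of all lines of a graph (generated by pairs of distinct vertices). -/
def lineSet (G : SimpleGraph V) : Set (Set V) :=
  {ℓ | ∃ u v : V, u ≠ v ∧ line G u v = ℓ}

lemma mem_interval_iff {G : SimpleGraph V} {x y w : V} :
    w ∈ interval G x y ↔ G.dist x y = G.dist x w + G.dist w y := Iff.rfl

lemma mem_line_iff {G : SimpleGraph V} {x y w : V} :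
    w ∈ line G x y ↔ (G.dist x y = G.dist x w + G.dist w y ∨
      G.dist w y = G.dist w x + G.dist x y ∨
      G.dist x w = G.dist x y + G.dist y w) := Iff.rfl

lemma dist_adj_le {G : SimpleGraph V} (hG : G.Connected) {x y : V} (h : G.Adj x y) (z : V) :
    G.dist z y ≤ G.dist z x + 1 := by
  have := hG.dist_triangle (u := z) (v := x) (w := y)
  have h1 : G.dist x y = 1 := dist_eq_one_iff_adj.mpr h
  omega

lemma walk_dist_getVert_le {G : SimpleGraph V} (hG : G.Connected) {x y : V}
    (W : G.Walk x y) (i : ℕ) : G.dist x (W.getVert i) ≤ i := by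
  induction i with
  | zero => simp [W.getVert_zero]
  | succ n ih =>
    by_cases hn : n < W.length
    · have := dist_adj_le hG (W.adj_getVert_succ hn) x
      omega
    · rw [W.getVert_of_length_le (by omega)]
      rw [W.getVert_of_length_le (le_of_not_gt hn)] at ih
      omega

lemma exists_chain {G : SimpleGraph V} (hG : G.Connected) (z u : V) :
    ∃ p : ℕ → V, p 0 = z ∧ p (G.dist z u) = u ∧
      (∀ i, i < G.dist z u → G.Adj (p i) (p (i+1))) ∧
      (∀ i, i ≤ G.dist z u → G.dist z (p i) = i) := by
  obtain ⟨W, hW⟩ := hG.exists_walk_length_eq_dist z u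
  have upper : ∀ i, G.dist z (W.getVert i) ≤ i := walk_dist_getVert_le hG W
  have seg : ∀ i, i ≤ W.length → G.dist (W.getVert i) u ≤ W.length - i := by
    intro i hi
    have h2 := walk_dist_getVert_le hG W.reverse (W.length - i)
    rw [W.getVert_reverse] at h2
    have : W.length - (W.length - i) = i := by omega
    rw [this] at h2
    rw [dist_comm]
    exact h2
  refine ⟨fun i => W.getVert i, W.getVert_zero, by rw [← hW]; exact W.getVert_length, ?_, ?_⟩
  · intro i hi
    exact W.adj_getVert_succ (by omega)
  · intro i hi
    show G.dist z (W.getVert i) = i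
    have h1 := upper i
    have h2 := seg i (by omega)
    have h3 := hG.dist_triangle (u := z) (v := W.getVert i) (w := u)
    omega

lemma mod_eq_one_iff {n s : ℕ} (hn : 2 ≤ n) (hs : s < 2 * n) :
    s % n = 1 ↔ (s = 1 ∨ s = n + 1) := by
  rcases Nat.lt_or_ge s n with h | h
  · rw [Nat.mod_eq_of_lt h]; omega
  · rw [Nat.mod_eq_sub_mod h, Nat.mod_eq_of_lt (by omega)]; omega

lemma hole_embedding {G : SimpleGraph V} {n : ℕ} (hn : 5 ≤ n) (f : ℕ → V)
    (hinj : ∀ x y, x < y → y < n → f x ≠ f y)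
    (hadj : ∀ x, x + 1 < n → G.Adj (f x) (f (x+1)))
    (hlast : G.Adj (f (n-1)) (f 0))
    (hnadj : ∀ x y, x < y → y < n → x + 1 ≠ y → ¬(x = 0 ∧ y = n-1) → ¬ G.Adj (f x) (f y)) :
    Nonempty (cycleGraph n ↪g G) := by
  have key : ∀ i j : Fin n, (cycleGraph n).Adj i j ↔
      (i.val = j.val + 1 ∧ j.val + 1 < n) ∨ (j.val = i.val + 1 ∧ i.val + 1 < n) ∨
      (i.val = 0 ∧ j.val = n - 1) ∨ (j.val = 0 ∧ i.val = n - 1) := by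
    intro i j
    rw [cycleGraph_adj']
    rw [Fin.sub_def, Fin.sub_def]
    simp only
    have hi := i.isLt
    have hj := j.isLt
    rw [mod_eq_one_iff (by omega) (by omega), mod_eq_one_iff (by omega) (by omega)]
    omega
  have hGadj : ∀ i j : Fin n, (cycleGraph n).Adj i j → G.Adj (f i.val) (f j.val) := by
    intro i j hij
    rw [key] at hij
    rcases hij with ⟨h1, h2⟩ | ⟨h1, h2⟩ | ⟨h1, h2⟩ | ⟨h1, h2⟩
    · rw [h1]; exact (hadj j.val h2).symm
    · rw [h1]; exact hadj i.val h2
    · rw [h1, h2]; exact hlast.symm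
    · rw [h1, h2]; exact hlast
  refine ⟨⟨⟨fun i => f i.val, ?_⟩, ?_⟩⟩
  · intro i j hij
    by_contra hne
    have hne' : i.val ≠ j.val := fun h => hne (Fin.ext h)
    rcases Nat.lt_or_ge i.val j.val with h | h
    · exact hinj i.val j.val h j.isLt hij
    · exact hinj j.val i.val (by omega) i.isLt hij.symm
  · intro i j
    show G.Adj (f i.val) (f j.val) ↔ (cycleGraph n).Adj i j
    constructor
    · intro hadjG
      rw [key]
      by_contra hc
      push_neg at hc
      obtain ⟨c1, c2, c3, c4⟩ := hc
      have hi := i.isLt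
      have hj := j.isLt
      have hne : i.val ≠ j.val := fun h => (G.irrefl (by rw [h] at hadjG; exact hadjG))
      rcases Nat.lt_or_ge i.val j.val with h | h
      · refine hnadj i.val j.val h hj ?_ ?_ hadjG <;> omega
      · refine hnadj j.val i.val (by omega) hi ?_ ?_ hadjG.symm <;> omega
    · exact hGadj i j

lemma hard {G : SimpleGraph V} (hG : G.Connected) (hH : HoleFree G)
    {u v z c0 : V} (huc : G.Adj u c0) (hcv : G.Adj c0 v)
    (hline : line G u c0 = line G c0 v) (huv_ne : u ≠ v) (huv_nadj : ¬ G.Adj u v)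
    (ha2 : 2 ≤ G.dist z u) (hab : G.dist z v = G.dist z u)
    (hk1 : G.dist z u ≤ G.dist z c0) :
    ∃ c : V, G.Adj u c ∧ G.Adj c v ∧ c ∈ interval G z u ∧ c ∈ interval G z v := by
  classical
  set a := G.dist z u with ha_def
  obtain ⟨p, hp0, hpa, hpadj, hpd⟩ := exists_chain hG z u
  obtain ⟨q, hq0, hqa, hqadj, hqd⟩ := exists_chain hG z v
  rw [hab] at hqa hqadj hqd
  -- basic distance facts
  have d_uc : G.dist u c0 = 1 := dist_eq_one_iff_adj.mpr huc
  have d_cu : G.dist c0 u = 1 := by rw [dist_comm]; exact d_uc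
  have d_cv : G.dist c0 v = 1 := dist_eq_one_iff_adj.mpr hcv
  have d_vc : G.dist v c0 = 1 := by rw [dist_comm]; exact d_cv
  have hPu : G.Adj (p (a-1)) u := by
    have h := hpadj (a-1) (by omega)
    rwa [show a-1+1 = a by omega, hpa] at h
  have hQv : G.Adj (q (a-1)) v := by
    have h := hqadj (a-1) (by omega)
    rwa [show a-1+1 = a by omega, hqa] at h
  have dzP : G.dist z (p (a-1)) = a - 1 := hpd _ (by omega)
  have dzQ : G.dist z (q (a-1)) = a - 1 := hqd _ (by omega)
  have d_Pu : G.dist (p (a-1)) u = 1 := dist_eq_one_iff_adj.mpr hPu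
  have d_uP : G.dist u (p (a-1)) = 1 := by rw [dist_comm]; exact d_Pu
  have d_Qv : G.dist (q (a-1)) v = 1 := dist_eq_one_iff_adj.mpr hQv
  have d_vQ : G.dist v (q (a-1)) = 1 := by rw [dist_comm]; exact d_Qv
  by_cases hPv : G.Adj (p (a-1)) v
  · refine ⟨p (a-1), hPu.symm, hPv, ?_, ?_⟩
    · rw [mem_interval_iff, dzP, d_Pu]; omega
    · rw [mem_interval_iff, hab, dzP, dist_eq_one_iff_adj.mpr hPv]; omega
  by_cases hQu : G.Adj u (q (a-1))
  · refine ⟨q (a-1), hQu, hQv, ?_, ?_⟩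
    · rw [mem_interval_iff, dzQ, dist_eq_one_iff_adj.mpr hQu.symm]; omega
    · rw [mem_interval_iff, hab, dzQ, d_Qv]; omega
  exfalso
  -- derived facts about P = p (a-1)
  have cPc : G.dist c0 (p (a-1)) = G.dist (p (a-1)) c0 := dist_comm
  have cPv : G.dist v (p (a-1)) = G.dist (p (a-1)) v := dist_comm
  have hPc_ne0 : G.dist (p (a-1)) c0 ≠ 0 := by
    intro h
    have := hG.dist_eq_zero_iff.mp h
    rw [this] at dzP
    omega
  have hPc_le : G.dist (p (a-1)) c0 ≤ 2 := by
    have t := hG.dist_triangle (u := p (a-1)) (v := u) (w := c0)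
    omega
  have hPv_ne0 : G.dist (p (a-1)) v ≠ 0 := by
    intro h
    have := hG.dist_eq_zero_iff.mp h
    rw [this] at dzP
    omega
  have hPv_le : G.dist (p (a-1)) v ≤ G.dist (p (a-1)) c0 + 1 := by
    have t := hG.dist_triangle (u := p (a-1)) (v := c0) (w := v)
    omega
  have hPv_ne1 : G.dist (p (a-1)) v ≠ 1 := fun h => hPv (dist_eq_one_iff_adj.mp h)
  have hPlin : p (a-1) ∈ line G u c0 ↔ G.dist (p (a-1)) c0 = 2 := by
    rw [mem_line_iff]
    omega
  have keyP : G.dist (p (a-1)) v = 3 ∧ G.dist (p (a-1)) c0 = 2 := by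
    rcases (show G.dist (p (a-1)) c0 = 1 ∨ G.dist (p (a-1)) c0 = 2 by omega) with h | h
    · have hni : p (a-1) ∉ line G c0 v := by
        rw [← hline, hPlin]; omega
      rw [mem_line_iff] at hni
      omega
    · have hin : p (a-1) ∈ line G c0 v := by rw [← hline]; exact hPlin.mpr h
      rw [mem_line_iff] at hin
      omega
  -- derived facts about Q = q (a-1)
  have cQc : G.dist c0 (q (a-1)) = G.dist (q (a-1)) c0 := dist_comm
  have cQu : G.dist u (q (a-1)) = G.dist (q (a-1)) u := dist_comm
  have hQc_ne0 : G.dist (q (a-1)) c0 ≠ 0 := by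
    intro h
    have := hG.dist_eq_zero_iff.mp h
    rw [this] at dzQ
    omega
  have hQc_le : G.dist (q (a-1)) c0 ≤ 2 := by
    have t := hG.dist_triangle (u := q (a-1)) (v := v) (w := c0)
    omega
  have hQu_ne0 : G.dist (q (a-1)) u ≠ 0 := by
    intro h
    have := hG.dist_eq_zero_iff.mp h
    rw [this] at dzQ
    omega
  have hQu_le : G.dist u (q (a-1)) ≤ G.dist (q (a-1)) c0 + 1 := by
    have t := hG.dist_triangle (u := u) (v := c0) (w := q (a-1))
    omega
  have hQu_ne1 : G.dist (q (a-1)) u ≠ 1 := fun h => hQu (dist_eq_one_iff_adj.mp h).symm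
  have hQlin : q (a-1) ∈ line G c0 v ↔ G.dist (q (a-1)) c0 = 2 := by
    rw [mem_line_iff]
    omega
  have keyQ : G.dist (q (a-1)) u = 3 ∧ G.dist (q (a-1)) c0 = 2 := by
    rcases (show G.dist (q (a-1)) c0 = 1 ∨ G.dist (q (a-1)) c0 = 2 by omega) with h | h
    · have hni : q (a-1) ∉ line G u c0 := by
        rw [hline, hQlin]; omega
      rw [mem_line_iff] at hni
      omega
    · have hin : q (a-1) ∈ line G u c0 := by rw [hline]; exact hQlin.mpr h
      rw [mem_line_iff] at hin
      omega
  -- maximal joined pair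
  have hP0 : ∃ r t, r + t = 0 ∧ r ≤ a-1 ∧ t ≤ a-1 ∧ (p r = q t ∨ G.Adj (p r) (q t)) :=
    ⟨0, 0, rfl, by omega, by omega, Or.inl (by rw [hp0, hq0])⟩
  have hs0 := Nat.findGreatest_spec (P := fun s =>
      ∃ r t, r + t = s ∧ r ≤ a-1 ∧ t ≤ a-1 ∧ (p r = q t ∨ G.Adj (p r) (q t)))
      (m := 0) (n := 2*a) (Nat.zero_le _) hP0
  obtain ⟨i, j, hijs, hi, hj, hjoin⟩ := hs0
  have hmax : ∀ r t, r ≤ a-1 → t ≤ a-1 → (p r = q t ∨ G.Adj (p r) (q t)) → r + t ≤ i + j := by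
    intro r t hr ht h
    rw [hijs]
    exact Nat.le_findGreatest (by omega) ⟨r, t, rfl, hr, ht, h⟩
  have hAdj_ij : G.Adj (p i) (q j) := by
    rcases hjoin with h | h
    · exfalso
      have hij : i = j := by
        have h1 := hpd i (by omega)
        have h2 := hqd j (by omega)
        rw [h] at h1
        omega
      subst hij
      have hia : i < a - 1 := by
        rcases Nat.lt_or_ge i (a-1) with h' | h'
        · exact h'
        · exfalso
          have hieq : i = a - 1 := by omega
          rw [hieq] at h
          have h3 := keyQ.1
          rw [← h] at h3
          omega
      have hadj2 : G.Adj (p i) (q (i+1)) := by rw [h]; exact hqadj i (by omega)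
      have := hmax i (i+1) (by omega) (by omega) (Or.inr hadj2)
      omega
    · exact h
  -- helpers
  have gap : ∀ w w' : V, G.dist z w + 2 ≤ G.dist z w' → ¬ G.Adj w w' := by
    intro w w' hgap hadj
    have := dist_adj_le hG hadj z
    omega
  have gap' : ∀ w w' : V, G.dist z w + 2 ≤ G.dist z w' → ¬ G.Adj w' w :=
    fun w w' h hadj => gap w w' h hadj.symm
  have ne_of_dz : ∀ w w' : V, G.dist z w ≠ G.dist z w' → w ≠ w' :=
    fun w w' h he => h (by rw [he])
  have nadj_of_dist : ∀ w w' : V, G.dist w w' ≠ 1 → ¬ G.Adj w w' :=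
    fun w w' h ha => h (dist_eq_one_iff_adj.mpr ha)
  obtain ⟨A, hA⟩ : ∃ A, A = a - i := ⟨_, rfl⟩
  obtain ⟨B, hB⟩ : ∃ B, B = a - j := ⟨_, rfl⟩
  -- the cycle function
  obtain ⟨f, fv1, fv2, fv3⟩ : ∃ f : ℕ → V, (∀ x, x ≤ A → f x = p (i+x)) ∧
      f (A+1) = c0 ∧ (∀ x, A+2 ≤ x → f x = q (a+A+2-x)) := by
    refine ⟨fun x => if x ≤ A then p (i+x) else if x = A+1 then c0 else q (a+A+2-x),
      fun x hx => if_pos hx, (if_neg (by omega)).trans (if_pos rfl),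
      fun x hx => (if_neg (by omega)).trans (if_neg (by omega))⟩
  -- injectivity
  have h1 : ∀ x y, x < y → y < A+B+3 → f x ≠ f y := by
    intro x y hxy hy
    by_cases hx1 : x ≤ A
    · rw [fv1 x hx1]
      by_cases hy1 : y ≤ A
      · rw [fv1 y hy1]
        exact ne_of_dz _ _ (by rw [hpd _ (by omega), hpd _ (by omega)]; omega)
      · by_cases hy2 : y = A+1
        · rw [hy2, fv2]
          by_cases hxA : x = A
          · rw [hxA, show i + A = a by omega, hpa]
            exact huc.ne
          · exact ne_of_dz _ _ (by rw [hpd _ (by omega)]; omega)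
        · have hy3 : A+2 ≤ y := by omega
          rw [fv3 y hy3]
          have hsj : j ≤ a+A+2-y := by omega
          have hsa : a+A+2-y ≤ a := by omega
          by_cases hxA : x = A
          · rw [hxA, show i + A = a by omega, hpa]
            by_cases hsA : a+A+2-y = a
            · rw [hsA, hqa]; exact huv_ne
            · exact ne_of_dz _ _ (by rw [hqd _ hsa]; omega)
          · by_cases hsA : a+A+2-y = a
            · rw [hsA, hqa]
              exact ne_of_dz _ _ (by rw [hpd _ (by omega), hab]; omega)
            · intro he
              have hm := hmax (i+x) (a+A+2-y) (by omega) (by omega) (Or.inl he)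
              have hxy0 : ¬(x = 0 ∧ y = A+B+2) := by
                intro ⟨hx0, hy0⟩
                rw [hx0, hy0] at he
                simp only [Nat.add_zero] at he
                rw [show a+A+2-(A+B+2) = j by omega] at he
                exact hAdj_ij.ne he
              omega
    · by_cases hx2 : x = A+1
      · rw [hx2, fv2, fv3 y (by omega)]
        have hsa : a+A+2-y ≤ a := by omega
        by_cases hsA : a+A+2-y = a
        · rw [hsA, hqa]; exact hcv.ne
        · exact (ne_of_dz _ _ (by rw [hqd _ hsa]; omega)).symm
      · rw [fv3 x (by omega), fv3 y (by omega)]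
        exact ne_of_dz _ _ (by rw [hqd _ (by omega), hqd _ (by omega)]; omega)
  -- cycle adjacency
  have h2 : ∀ x, x + 1 < A+B+3 → G.Adj (f x) (f (x+1)) := by
    intro x hx
    by_cases hx1 : x + 1 ≤ A
    · rw [fv1 x (by omega), fv1 (x+1) hx1]
      have h := hpadj (i+x) (by omega)
      rwa [show i+x+1 = i+(x+1) by omega] at h
    · by_cases hx2 : x = A
      · rw [hx2, fv1 A le_rfl, show i + A = a by omega, hpa, fv2]
        exact huc
      · by_cases hx3 : x = A+1
        · rw [hx3, fv2, fv3 (A+2) le_rfl, show a+A+2-(A+2) = a by omega, hqa]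
          exact hcv
        · have hx4 : A+2 ≤ x := by omega
          rw [fv3 x hx4, fv3 (x+1) (by omega)]
          have hs1 : a+A+2-x ≤ a := by omega
          have hs2 : 1 ≤ a+A+2-x := by omega
          have h := hqadj (a+A+2-(x+1)) (by omega)
          rw [show a+A+2-(x+1)+1 = a+A+2-x by omega] at h
          exact h.symm
      -- done
  have h3 : G.Adj (f (A+B+3-1)) (f 0) := by
    rw [show A+B+3-1 = A+B+2 by omega, fv3 (A+B+2) (by omega),
      show a+A+2-(A+B+2) = j by omega, fv1 0 (by omega), Nat.add_zero]
    exact hAdj_ij.symm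
  -- non-adjacency
  have h4 : ∀ x y, x < y → y < A+B+3 → x + 1 ≠ y → ¬(x = 0 ∧ y = A+B+3-1) →
      ¬ G.Adj (f x) (f y) := by
    intro x y hxy hy hcons hwrap
    rw [show A+B+3-1 = A+B+2 by omega] at hwrap
    by_cases hx1 : x ≤ A
    · rw [fv1 x hx1]
      by_cases hy1 : y ≤ A
      · rw [fv1 y hy1]
        apply gap
        rw [hpd _ (by omega), hpd _ (by omega)]
        omega
      · by_cases hy2 : y = A+1
        · rw [hy2, fv2]
          by_cases hr : i + x = a - 1
          · rw [hr]
            exact nadj_of_dist _ _ (by omega)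
          · apply gap
            rw [hpd _ (by omega)]
            omega
        · have hy3 : A+2 ≤ y := by omega
          rw [fv3 y hy3]
          have hsj : j ≤ a+A+2-y := by omega
          have hsa : a+A+2-y ≤ a := by omega
          by_cases hxA : x = A
          · rw [hxA, show i + A = a by omega, hpa]
            by_cases hsA : a+A+2-y = a
            · rw [hsA, hqa]; exact huv_nadj
            · by_cases hsA1 : a+A+2-y = a-1
              · rw [hsA1]; exact hQu
              · apply gap'
                rw [hqd _ hsa]
                omega
          · by_cases hsA : a+A+2-y = a
            · rw [hsA, hqa]
              by_cases hr : i + x = a - 1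
              · rw [hr]; exact hPv
              · apply gap
                rw [hpd _ (by omega), hab]
                omega
            · intro hadj
              have hm := hmax (i+x) (a+A+2-y) (by omega) (by omega) (Or.inr hadj)
              have hxy0 : ¬(x = 0 ∧ a+A+2-y = j) := by
                intro ⟨hx0, hy0⟩
                apply hwrap
                exact ⟨hx0, by omega⟩
              omega
    · by_cases hx2 : x = A+1
      · rw [hx2, fv2, fv3 y (by omega)]
        have hsa : a+A+2-y ≤ a-1 := by omega
        by_cases hsA1 : a+A+2-y = a-1
        · rw [hsA1]
          exact nadj_of_dist _ _ (by omega)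
        · apply gap'
          rw [hqd _ (by omega)]
          omega
      · rw [fv3 x (by omega), fv3 y (by omega)]
        apply gap'
        rw [hqd _ (by omega), hqd _ (by omega)]
        omega
  obtain ⟨emb⟩ := hole_embedding (G := G) (n := A+B+3) (by omega) f h1 h2 h3 h4
  exact (hH (A+B+3) (by omega)).false emb

theorem stmt10 (G : SimpleGraph V) (hG : G.Connected) (hH : HoleFree G)
    (u v z : V) (huv : GoodPair G u v) (hz : z ∉ line G u v) :
    ∃ c : V, G.Adj u c ∧ G.Adj c v ∧ c ∈ interval G z u ∧ c ∈ interval G z v := by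
  obtain ⟨hd2, c0, huc, hcv, hline⟩ := huv
  rw [mem_line_iff] at hz
  push_neg at hz
  obtain ⟨hz1, hz2, hz3⟩ := hz
  have d_uc : G.dist u c0 = 1 := dist_eq_one_iff_adj.mpr huc
  have d_cu : G.dist c0 u = 1 := by rw [dist_comm]; exact d_uc
  have d_cv : G.dist c0 v = 1 := dist_eq_one_iff_adj.mpr hcv
  have d_vc : G.dist v c0 = 1 := by rw [dist_comm]; exact d_cv
  have c_uz : G.dist u z = G.dist z u := dist_comm
  have c_vz : G.dist v z = G.dist z v := dist_comm
  have c_cz : G.dist c0 z = G.dist z c0 := dist_comm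
  have huv_ne : u ≠ v := by
    intro h
    rw [h] at hd2
    rw [SimpleGraph.dist_self] at hd2
    omega
  have huv_nadj : ¬ G.Adj u v := by
    intro h
    have := dist_eq_one_iff_adj.mpr h
    omega
  have hzu0 : G.dist z u ≠ 0 := by
    intro h
    have hzu : z = u := hG.dist_eq_zero_iff.mp h
    subst hzu
    rw [SimpleGraph.dist_self] at hz1 c_uz
    omega
  have hzv0 : G.dist z v ≠ 0 := by
    intro h
    have hzv : z = v := hG.dist_eq_zero_iff.mp h
    subst hzv
    rw [SimpleGraph.dist_self] at hz3 c_vz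
    omega
  have t1 : G.dist z c0 ≤ G.dist z u + G.dist u c0 := hG.dist_triangle
  have t2 : G.dist z u ≤ G.dist z c0 + G.dist c0 u := hG.dist_triangle
  have t3 : G.dist z c0 ≤ G.dist z v + G.dist v c0 := hG.dist_triangle
  have t4 : G.dist z v ≤ G.dist z c0 + G.dist c0 v := hG.dist_triangle
  rcases (show G.dist z c0 + 1 = G.dist z u ∨ G.dist z c0 = G.dist z u ∨
      G.dist z c0 = G.dist z u + 1 by omega) with hk | hk | hk
  · -- c0 on a shortest z-u path; show it also works for v
    have hzl : z ∈ line G u c0 := by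
      rw [mem_line_iff]
      omega
    rw [hline, mem_line_iff] at hzl
    by_cases hk0 : G.dist z c0 = 0
    · exfalso
      have hzc : z = c0 := hG.dist_eq_zero_iff.mp hk0
      subst hzc
      omega
    · have hb : G.dist z v = G.dist z c0 + 1 := by omega
      exact ⟨c0, huc, hcv, by rw [mem_interval_iff]; omega, by rw [mem_interval_iff]; omega⟩
  · -- dist z c0 = dist z u : hard case with b = a
    have hzl : z ∉ line G u c0 := by
      rw [mem_line_iff]
      omega
    rw [hline, mem_line_iff] at hzl
    have hb : G.dist z v = G.dist z u := by omega
    exact hard hG hH huc hcv hline huv_ne huv_nadj (by omega) hb (by omega)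
  · -- dist z c0 = dist z u + 1
    have hzl : z ∈ line G u c0 := by
      rw [mem_line_iff]
      omega
    rw [hline, mem_line_iff] at hzl
    have hb : G.dist z v = G.dist z u := by omega
    exact hard hG hH huc hcv hline huv_ne huv_nadj (by omega) hb (by omega)
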